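/- arXiv:0712.1321 — 5 statements merged into one kernel-verified Lean document; each statement's English description precedes it below -/
import Mathlib

section
/- Let θ : J → ℝ be differentiable on an interval J, satisfying θ' ≤ 0 and θ'(t) ≤ −θ(t)²/(n−1) − 2θ(t)·g'(t)/(n−1) on J, where g : J → ℝ is differentiable with g ≤ k for a constant k, and n ≥ 2. If t₁ ∈ J with θ(t₁) < 0, then J does not contain the point t₁ + σ where σ = (n − 1 + 2k − 2g(t₁))/(−θ(t₁)). -/
open Set

/-- Proposition 3.4 (m = ∞ Raychaudhuri comparison): if θ' ≤ 0 and
θ' ≤ −θ²/(n−1) − 2θg'/(n−1) with g ≤ k, and θ(t₁) < 0, then J does not contain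
t₁ + σ where σ = (n − 1 + 2k − 2g(t₁))/(−θ(t₁)). -/
theorem stmt_4 (J : Set ℝ) (hJ : J.OrdConnected) (n : ℕ) (hn : 2 ≤ n)
    (θ θ' g g' : ℝ → ℝ) (k : ℝ)
    (hθ : ∀ t ∈ J, HasDerivAt θ (θ' t) t)
    (hg : ∀ t ∈ J, HasDerivAt g (g' t) t)
    (hmono : ∀ t ∈ J, θ' t ≤ 0)
    (hineq : ∀ t ∈ J,
      θ' t ≤ -θ t ^ 2 / ((n : ℝ) - 1) - 2 * θ t * g' t / ((n : ℝ) - 1))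
    (hgk : ∀ t ∈ J, g t ≤ k)
    (t₁ : ℝ) (ht₁ : t₁ ∈ J) (hneg : θ t₁ < 0) :
    t₁ + ((n : ℝ) - 1 + 2 * k - 2 * g t₁) / (-θ t₁) ∉ J := by
  intro ht₂
  set N : ℝ := (n : ℝ) - 1 with hNdef
  have hN1 : (1 : ℝ) ≤ N := by
    have h2n : (2 : ℝ) ≤ (n : ℝ) := by exact_mod_cast hn
    simp only [hNdef]; linarith
  have hN0 : (0 : ℝ) < N := by linarith
  have hA : (1 : ℝ) ≤ N + 2 * k - 2 * g t₁ := by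
    have := hgk t₁ ht₁; linarith
  set σ : ℝ := (N + 2 * k - 2 * g t₁) / (-θ t₁) with hσdef
  have hσ0 : 0 < σ := div_pos (by linarith) (by linarith)
  set t₂ : ℝ := t₁ + σ with ht₂def
  have hIcc : Icc t₁ t₂ ⊆ J := hJ.out ht₁ ht₂
  have ht₁mem : t₁ ∈ Icc t₁ t₂ := left_mem_Icc.mpr (by linarith)
  have ht₂mem : t₂ ∈ Icc t₁ t₂ := right_mem_Icc.mpr (by linarith)
  -- θ is antitone on [t₁, t₂]
  have hθanti : AntitoneOn θ (Icc t₁ t₂) := by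
    apply antitoneOn_of_deriv_nonpos (convex_Icc _ _)
    · exact fun x hx => (hθ x (hIcc hx)).continuousAt.continuousWithinAt
    · intro x hx
      rw [interior_Icc] at hx
      exact (hθ x (hIcc (Ioo_subset_Icc_self hx))).differentiableAt.differentiableWithinAt
    · intro x hx
      rw [interior_Icc] at hx
      rw [(hθ x (hIcc (Ioo_subset_Icc_self hx))).deriv]
      exact hmono x (hIcc (Ioo_subset_Icc_self hx))
  have hθneg : ∀ t ∈ Icc t₁ t₂, θ t < 0 := fun t ht =>
    lt_of_le_of_lt (hθanti ht₁mem ht ht.1) hneg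
  -- the comparison function φ and its derivative
  have hder : ∀ t ∈ Icc t₁ t₂,
      HasDerivAt (fun s => (N + 2 * k - 2 * g s) * (θ s)⁻¹ - (s - t₁))
        (-(2 * g' t) * (θ t)⁻¹ + (N + 2 * k - 2 * g t) * (-θ' t / θ t ^ 2) - 1) t := by
    intro t ht
    have htJ := hIcc ht
    have hne : θ t ≠ 0 := (hθneg t ht).ne
    have h1 : HasDerivAt (fun s => N + 2 * k - 2 * g s) (-(2 * g' t)) t := by
      simpa using HasDerivAt.const_sub (N + 2 * k) ((hg t htJ).const_mul 2)
    have h2 : HasDerivAt (fun s => (θ s)⁻¹) (-θ' t / θ t ^ 2) t := (hθ t htJ).inv hne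
    have h3 := (h1.mul h2).sub ((hasDerivAt_id t).sub_const t₁)
    exact h3
  -- the derivative of φ is nonnegative on [t₁, t₂]
  have hdernn : ∀ t ∈ Icc t₁ t₂,
      0 ≤ -(2 * g' t) * (θ t)⁻¹ + (N + 2 * k - 2 * g t) * (-θ' t / θ t ^ 2) - 1 := by
    intro t ht
    have htJ := hIcc ht
    have hlt : θ t < 0 := hθneg t ht
    have hne : θ t ≠ 0 := hlt.ne
    have h1 := hineq t htJ
    rw [← sub_div] at h1
    have h1' : θ' t * N ≤ -θ t ^ 2 - 2 * θ t * g' t := (le_div_iff₀ hN0).mp h1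
    have h2 : 0 ≤ (k - g t) * (-θ' t) :=
      mul_nonneg (sub_nonneg.mpr (hgk t htJ)) (neg_nonneg.mpr (hmono t htJ))
    have hkey : 0 ≤ -(2 * g' t) * θ t + (N + 2 * k - 2 * g t) * (-θ' t) - θ t ^ 2 := by
      nlinarith [h1', h2]
    have heq : -(2 * g' t) * (θ t)⁻¹ + (N + 2 * k - 2 * g t) * (-θ' t / θ t ^ 2) - 1
        = (-(2 * g' t) * θ t + (N + 2 * k - 2 * g t) * (-θ' t) - θ t ^ 2) / θ t ^ 2 := by
      field_simp
    rw [heq]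
    exact div_nonneg hkey (sq_nonneg _)
  -- φ is monotone
  have hφmono : MonotoneOn (fun s => (N + 2 * k - 2 * g s) * (θ s)⁻¹ - (s - t₁))
      (Icc t₁ t₂) := by
    apply monotoneOn_of_deriv_nonneg (convex_Icc _ _)
    · exact fun x hx => (hder x hx).continuousAt.continuousWithinAt
    · intro x hx
      rw [interior_Icc] at hx
      exact (hder x (Ioo_subset_Icc_self hx)).differentiableAt.differentiableWithinAt
    · intro x hx
      rw [interior_Icc] at hx
      rw [(hder x (Ioo_subset_Icc_self hx)).deriv]
      exact hdernn x (Ioo_subset_Icc_self hx)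
  have h12 := hφmono ht₁mem ht₂mem (by linarith)
  simp only at h12
  -- φ t₁ = -σ
  have hσθ : (N + 2 * k - 2 * g t₁) * (θ t₁)⁻¹ = -σ := by
    rw [hσdef, div_neg, neg_neg, div_eq_mul_inv]
  -- φ t₂ < -σ
  have hB : (0 : ℝ) < N + 2 * k - 2 * g t₂ := by
    have := hgk t₂ (hIcc ht₂mem); linarith
  have hinv2 : (θ t₂)⁻¹ < 0 := inv_lt_zero.mpr (hθneg t₂ ht₂mem)
  have hlt : (N + 2 * k - 2 * g t₂) * (θ t₂)⁻¹ < 0 := mul_neg_of_pos_of_neg hB hinv2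
  have ht21 : t₂ - t₁ = σ := by rw [ht₂def]; ring
  rw [hσθ, ht21] at h12
  linarith
end

section
/- Let R : ℝ → Matrix (Fin k) (Fin k) ℝ be continuous and symmetric-valued, and let B : ℝ → Matrix (Fin k) (Fin k) ℝ be a differentiable symmetric-valued solution of the Riccati equation B' + B² + R = 0 on all of ℝ. If tr(R(t)) ≥ 0 for all t and tr(B(t₀)) ≠ 0 for some t₀, then B cannot be defined on all of ℝ; equivalently, if B is globally defined and symmetric with tr R ≥ 0, then tr B ≡ 0, B ≡ 0, and hence R ≡ 0. -/
open Matrix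

/-- Auxiliary Riccati comparison: a globally defined real function with
`f' ≤ -f²/k` cannot be positive anywhere. -/
lemma riccati_aux (k : ℝ) (hk : 0 < k) (f f' : ℝ → ℝ)
    (hf : ∀ t, HasDerivAt f (f' t) t)
    (hle : ∀ t, f' t ≤ -(f t) ^ 2 / k)
    (t₀ : ℝ) (h0 : 0 < f t₀) : False := by
  have hdiff : Differentiable ℝ f := fun t => (hf t).differentiableAt
  have hanti : Antitone f := by
    apply antitone_of_deriv_nonpos hdiff
    intro x
    rw [(hf x).deriv]
    have h1 := hle x
    have h2 : 0 ≤ (f x) ^ 2 / k := by positivity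
    rw [neg_div] at h1
    linarith
  have hpos : ∀ t ≤ t₀, 0 < f t := fun t ht => lt_of_lt_of_le h0 (hanti ht)
  set g : ℝ → ℝ := fun t => (f t)⁻¹ with hgdef
  have hg : ∀ t ≤ t₀, HasDerivAt g (-f' t / (f t) ^ 2) t :=
    fun t ht => (hf t).inv (hpos t ht).ne'
  set h : ℝ → ℝ := fun t => g t - t / k with hhdef
  have hh : ∀ t ≤ t₀, HasDerivAt h (-f' t / (f t) ^ 2 - 1 / k) t := by
    intro t ht
    exact (hg t ht).sub ((hasDerivAt_id t).div_const k)
  have hmono : MonotoneOn h (Set.Iic t₀) := by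
    apply monotoneOn_of_deriv_nonneg (convex_Iic t₀)
    · apply ContinuousOn.sub
      · exact ContinuousOn.inv₀ hdiff.continuous.continuousOn
          (fun t ht => (hpos t ht).ne')
      · exact (continuous_id.div_const k).continuousOn
    · intro t ht
      rw [interior_Iic] at ht
      exact (hh t ht.le).differentiableAt.differentiableWithinAt
    · intro t ht
      rw [interior_Iic] at ht
      rw [(hh t ht.le).deriv]
      have hft : 0 < f t := hpos t ht.le
      have h1 : (f t) ^ 2 / k ≤ -f' t := by
        have h1 := hle t; rw [neg_div] at h1; linarith
      have h2 : 1 / k ≤ -f' t / (f t) ^ 2 := by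
        rw [div_le_div_iff₀ hk (by positivity)]
        calc 1 * (f t) ^ 2 = ((f t) ^ 2 / k) * k := by field_simp
        _ ≤ (-f' t) * k := by
          exact mul_le_mul_of_nonneg_right h1 hk.le
      linarith
  set t₁ : ℝ := t₀ - k * (g t₀ + 1) with ht₁def
  have hgt₀ : 0 < g t₀ := by
    simp only [hgdef]
    exact inv_pos.mpr h0
  have ht₁le : t₁ ≤ t₀ := by
    have : 0 < k * (g t₀ + 1) := by positivity
    simp only [ht₁def]; linarith
  have := hmono (Set.mem_Iic.mpr ht₁le) (Set.mem_Iic.mpr le_rfl) ht₁le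
  have hgt₁ : 0 < g t₁ := inv_pos.mpr (hpos t₁ ht₁le)
  simp only [hhdef, ht₁def] at this
  have hk' : k ≠ 0 := hk.ne'
  have : g (t₀ - k * (g t₀ + 1)) ≤ -1 := by
    have expand : (t₀ - k * (g t₀ + 1)) / k = t₀ / k - (g t₀ + 1) := by
      field_simp
    rw [expand] at this
    linarith
  simp only [ht₁def] at hgt₁
  linarith

/-- Lemma 3.9 / Proposition 3.5 (algebraic core): a globally defined symmetric
solution of the matrix Riccati equation B' + B² + R = 0 with tr R ≥ 0 must
satisfy tr B ≡ 0, B ≡ 0, and hence R ≡ 0. -/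
theorem stmt_6 (k : ℕ) (hk : 0 < k) (B B' R : ℝ → Matrix (Fin k) (Fin k) ℝ)
    (hB : ∀ t : ℝ, ∀ i j, HasDerivAt (fun s => B s i j) (B' t i j) t)
    (hBsym : ∀ t : ℝ, (B t)ᵀ = B t)
    (hRsym : ∀ t : ℝ, (R t)ᵀ = R t)
    (hRcont : ∀ i j, Continuous fun t => R t i j)
    (hode : ∀ t : ℝ, B' t + B t * B t + R t = 0)
    (htrR : ∀ t : ℝ, 0 ≤ (R t).trace) :
    (∀ t : ℝ, (B t).trace = 0) ∧ (∀ t : ℝ, B t = 0) ∧ (∀ t : ℝ, R t = 0) := by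
  set f : ℝ → ℝ := fun t => (B t).trace with hfdef
  set f' : ℝ → ℝ := fun t => (B' t).trace with hf'def
  have hf : ∀ t, HasDerivAt f (f' t) t := by
    intro t
    have : HasDerivAt (fun s => ∑ i, B s i i) (∑ i, B' t i i) t :=
      HasDerivAt.fun_sum (fun i _ => hB t i i)
    simpa [hfdef, hf'def, Matrix.trace, Matrix.diag] using this
  -- trace of B² as sum of squares
  have hBsq : ∀ t, (B t * B t).trace = ∑ i, ∑ j, (B t i j) ^ 2 := by
    intro t
    have hsymm : ∀ i j, B t j i = B t i j := by
      intro i j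
      conv_lhs => rw [← hBsym t]
      rfl
    calc (B t * B t).trace = ∑ i, ∑ j, B t i j * B t j i := by
          simp [Matrix.trace, Matrix.diag, Matrix.mul_apply]
      _ = ∑ i, ∑ j, (B t i j) ^ 2 := by
          apply Finset.sum_congr rfl; intro i _
          apply Finset.sum_congr rfl; intro j _
          rw [hsymm i j]; ring
  have hBsqnn : ∀ t, 0 ≤ (B t * B t).trace := by
    intro t; rw [hBsq t]; positivity
  -- Cauchy-Schwarz: (tr B)² ≤ k · tr B²
  have hCS : ∀ t, (f t) ^ 2 ≤ (k : ℝ) * (B t * B t).trace := by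
    intro t
    have h1 : (∑ i, B t i i) ^ 2 ≤ ((Finset.univ : Finset (Fin k)).card : ℝ) * ∑ i, (B t i i) ^ 2 :=
      sq_sum_le_card_mul_sum_sq (s := (Finset.univ : Finset (Fin k))) (f := fun i => B t i i)
    have h2 : ∑ i, (B t i i) ^ 2 ≤ ∑ i, ∑ j, (B t i j) ^ 2 := by
      apply Finset.sum_le_sum
      intro i _
      exact Finset.single_le_sum (f := fun j => (B t i j) ^ 2)
        (fun j _ => sq_nonneg _) (Finset.mem_univ i)
    have : (f t) ^ 2 = (∑ i, B t i i) ^ 2 := by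
      simp [hfdef, Matrix.trace, Matrix.diag]
    rw [this, hBsq t, Finset.card_univ, Fintype.card_fin] at *
    calc (∑ i, B t i i) ^ 2 ≤ (k : ℝ) * ∑ i, (B t i i) ^ 2 := h1
      _ ≤ (k : ℝ) * ∑ i, ∑ j, (B t i j) ^ 2 := by
          apply mul_le_mul_of_nonneg_left h2 (by positivity)
  -- the trace ODE
  have htr : ∀ t, f' t = -(B t * B t).trace - (R t).trace := by
    intro t
    have := congrArg Matrix.trace (hode t)
    simp only [Matrix.trace_add, Matrix.trace_zero] at this
    simp only [hf'def]
    linarith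
  have hkpos : (0 : ℝ) < k := by exact_mod_cast hk
  have hle : ∀ t, f' t ≤ -(f t) ^ 2 / (k : ℝ) := by
    intro t
    rw [htr t]
    have h1 : -(B t * B t).trace ≤ -(f t) ^ 2 / (k : ℝ) := by
      rw [neg_div, neg_le_neg_iff, div_le_iff₀ hkpos]
      nlinarith [hCS t]
    linarith [htrR t]
  -- trace B ≡ 0
  have htrB : ∀ t, f t = 0 := by
    intro t₀
    by_contra hne
    rcases lt_or_gt_of_ne hne with hlt | hgt
    · -- f t₀ < 0 : reflect time
      set g : ℝ → ℝ := fun t => -f (2 * t₀ - t) with hg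
      set g' : ℝ → ℝ := fun t => f' (2 * t₀ - t) with hg'
      have hgd : ∀ t, HasDerivAt g (g' t) t := by
        intro t
        have hinner : HasDerivAt (fun t : ℝ => 2 * t₀ - t) (-1) t := by
          simpa using (hasDerivAt_const t (2 * t₀)).fun_sub (hasDerivAt_id t)
        have := ((hf (2 * t₀ - t)).comp t hinner).fun_neg
        simpa [hg, hg', Function.comp] using this
      have hgle : ∀ t, g' t ≤ -(g t) ^ 2 / (k : ℝ) := by
        intro t
        simp only [hg, hg', neg_sq]
        exact hle (2 * t₀ - t)
      have hg0 : 0 < g t₀ := by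
        simp only [hg]
        have : 2 * t₀ - t₀ = t₀ := by ring
        rw [this]; linarith
      exact riccati_aux (k : ℝ) hkpos g g' hgd hgle t₀ hg0
    · exact riccati_aux (k : ℝ) hkpos f f' hf hle t₀ hgt
  -- B ≡ 0
  have hBzero : ∀ t, B t = 0 := by
    intro t
    have hfzero : f = fun _ => (0 : ℝ) := funext htrB
    have hf'zero : f' t = 0 := by
      have h1 : HasDerivAt f 0 t := by
        rw [hfzero]; exact hasDerivAt_const t 0
      exact (hf t).unique h1
    have : (B t * B t).trace = 0 := by
      have := htr t
      rw [hf'zero] at this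
      have h2 := htrR t
      have h3 := hBsqnn t
      linarith
    rw [hBsq t] at this
    ext i j
    have hsum := (Finset.sum_eq_zero_iff_of_nonneg
      (fun i (_ : i ∈ Finset.univ) => Finset.sum_nonneg
        (fun j _ => sq_nonneg (B t i j)))).mp this i (Finset.mem_univ i)
    have := (Finset.sum_eq_zero_iff_of_nonneg
      (fun j (_ : j ∈ Finset.univ) => sq_nonneg (B t i j))).mp hsum j (Finset.mem_univ j)
    have := pow_eq_zero_iff (n := 2) (by norm_num) |>.mp this
    simpa using this
  refine ⟨htrB, hBzero, ?_⟩
  intro t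
  have hB'zero : B' t = 0 := by
    ext i j
    have h1 : HasDerivAt (fun s => B s i j) 0 t := by
      have : (fun s => B s i j) = fun _ => (0 : ℝ) := by
        funext s; rw [hBzero s]; rfl
      rw [this]; exact hasDerivAt_const t 0
    have := (hB t i j).unique h1
    simpa using this
  have := hode t
  rw [hB'zero, hBzero t] at this
  simpa using this
end

section
/- Let R : [t₁,∞) → Matrix (Fin k) (Fin k) ℝ be continuous and symmetric-valued, and let A be the solution of A'' + RA = 0 with A(t₁) = 0, A'(t₁) = I. Assume A(t) is invertible for all t > t₁ (no conjugate points). For s > t₁, define D_s(t) = A(t) ∫_t^s (A(τ)ᵀ A(τ))⁻¹ dτ for t ∈ (t₁, s]. Then D_s solves D_s'' + R D_s = 0, D_s(s) = 0, lim_{t→t₁⁺} D_s(t) = I, and D_s(t) is invertible for t ∈ (t₁, s). -/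
open Matrix Set Filter


namespace Stmt10Aux

variable {n : Type*} [Fintype n] [DecidableEq n]

lemma det_differentiableAt {B : ℝ → Matrix n n ℝ} {t : ℝ}
    (h : ∀ i j, DifferentiableAt ℝ (fun u => B u i j) t) :
    DifferentiableAt ℝ (fun u => (B u).det) t := by
  have e : (fun u => (B u).det)
      = fun u => ∑ σ : Equiv.Perm n, ((Equiv.Perm.sign σ : ℤ) : ℝ) * ∏ i, B u (σ i) i := by
    funext u
    rw [Matrix.det_apply]
    simp [Units.smul_def, zsmul_eq_mul]
  rw [e]
  exact DifferentiableAt.fun_sum fun σ _ =>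
    (DifferentiableAt.fun_finsetProd fun i _ => h (σ i) i).const_mul _

lemma adjugate_differentiableAt {B : ℝ → Matrix n n ℝ} {t : ℝ}
    (h : ∀ i j, DifferentiableAt ℝ (fun u => B u i j) t) (i j : n) :
    DifferentiableAt ℝ (fun u => (B u).adjugate i j) t := by
  simp only [Matrix.adjugate_apply]
  apply det_differentiableAt
  intro i' j'
  simp only [Matrix.updateRow_apply]
  by_cases hij : i' = j <;> simp [hij, h i' j', differentiableAt_const]

lemma inv_differentiableAt {B : ℝ → Matrix n n ℝ} {t : ℝ}
    (h : ∀ i j, DifferentiableAt ℝ (fun u => B u i j) t)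
    (hdet : (B t).det ≠ 0) (i j : n) :
    DifferentiableAt ℝ (fun u => (B u)⁻¹ i j) t := by
  have e : ∀ u, (B u)⁻¹ i j = ((B u).det)⁻¹ * (B u).adjugate i j := by
    intro u
    rw [Matrix.inv_def, Ring.inverse_eq_inv, Matrix.smul_apply, smul_eq_mul]
  simp only [e]
  exact ((det_differentiableAt h).inv hdet).mul (adjugate_differentiableAt h i j)

lemma tendsto_inv_entries {ι : Type*} {l : Filter ι} {F : ι → Matrix n n ℝ}
    {L : Matrix n n ℝ} (h : ∀ i j, Tendsto (fun x => F x i j) l (nhds (L i j)))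
    (hdet : L.det ≠ 0) (i j : n) :
    Tendsto (fun x => (F x)⁻¹ i j) l (nhds (L⁻¹ i j)) := by
  have hF : Tendsto F l (nhds L) := by
    refine tendsto_pi_nhds.2 fun a => ?_
    rw [tendsto_pi_nhds]
    intro b
    exact h a b
  have hdetF : Tendsto (fun x => (F x).det) l (nhds L.det) :=
    ((Continuous.matrix_det continuous_id).tendsto L).comp hF
  have hadj : Tendsto (fun x => (F x).adjugate i j) l (nhds (L.adjugate i j)) := by
    have h1 := ((Continuous.matrix_adjugate continuous_id).tendsto L).comp hF
    exact (((continuous_apply j).comp (continuous_apply i)).tendsto _).comp h1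
  have e : ∀ P : Matrix n n ℝ, P⁻¹ i j = (P.det)⁻¹ * P.adjugate i j := by
    intro P
    rw [Matrix.inv_def, Ring.inverse_eq_inv, Matrix.smul_apply, smul_eq_mul]
  simp only [e]
  exact (hdetF.inv₀ hdet).mul hadj

section
open intervalIntegral MeasureTheory



set_option maxHeartbeats 1000000

lemma integral_phi {t₁ a b : ℝ} (ha : t₁ < a) (hb : t₁ < b) :
    ∫ τ in a..b, ((τ - t₁) ^ 2)⁻¹ = (a - t₁)⁻¹ - (b - t₁)⁻¹ := by
  have key : ∀ x ∈ uIcc a b, HasDerivAt (fun y => -(y - t₁)⁻¹) (((x - t₁) ^ 2)⁻¹) x := by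
    intro x hx
    have hx1 : t₁ < x := lt_of_lt_of_le (lt_min ha hb) hx.1
    have hne : x - t₁ ≠ 0 := sub_ne_zero.2 hx1.ne'
    have h1 : HasDerivAt (fun y => (y - t₁)⁻¹) (-1 / (x - t₁) ^ 2) x :=
      ((hasDerivAt_id x).sub_const t₁).inv hne
    have h2 := h1.fun_neg
    refine h2.congr_deriv ?_
    ring
  have hcont : ContinuousOn (fun τ => ((τ - t₁) ^ 2)⁻¹) (uIcc a b) := by
    apply ContinuousOn.inv₀
    · fun_prop
    · intro x hx
      have hx1 : t₁ < x := lt_of_lt_of_le (lt_min ha hb) hx.1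
      exact pow_ne_zero 2 (sub_ne_zero.2 hx1.ne')
  rw [integral_eq_sub_of_hasDerivAt key (hcont.intervalIntegrable)]
  ring

lemma tendsto_key {t₁ s c : ℝ} (hs : t₁ < s) {g : ℝ → ℝ}
    (hg : ∀ τ ∈ Ioi t₁, ContinuousAt g τ)
    (hlim : Tendsto (fun τ => (τ - t₁) ^ 2 * g τ) (nhdsWithin t₁ (Ioi t₁)) (nhds c)) :
    Tendsto (fun t => (t - t₁) * ∫ τ in t..s, g τ) (nhdsWithin t₁ (Ioi t₁)) (nhds c) := by
  have hgon : ∀ a b : ℝ, t₁ < a → t₁ < b → ContinuousOn g (uIcc a b) := by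
    intro a b ha hb
    exact fun x hx => (hg x (lt_of_lt_of_le (lt_min ha hb) hx.1)).continuousWithinAt
  have hInt : ∀ a b : ℝ, t₁ < a → t₁ < b → IntervalIntegrable g MeasureTheory.volume a b :=
    fun a b ha hb => (hgon a b ha hb).intervalIntegrable
  rw [Metric.tendsto_nhdsWithin_nhds] at hlim ⊢
  intro ε hε
  have hε4 : 0 < ε / 4 := by linarith
  obtain ⟨δ₁, hδ₁, hδ₁'⟩ := hlim (ε / 4) hε4
  set t₀ : ℝ := min (t₁ + δ₁ / 2) ((t₁ + s) / 2) with ht₀def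
  have ht₀1 : t₁ < t₀ := lt_min (by linarith) (by linarith)
  have ht₀s : t₀ < s := lt_of_le_of_lt (min_le_right _ _) (by linarith)
  have ht₀inv : (0:ℝ) < (t₀ - t₁)⁻¹ := inv_pos.2 (by linarith)
  have hbound : ∀ τ ∈ Ioc t₁ t₀, |(τ - t₁) ^ 2 * g τ - c| ≤ ε / 4 := by
    intro τ hτ
    have h1 : dist τ t₁ < δ₁ := by
      rw [Real.dist_eq, abs_of_pos (by linarith [hτ.1] : (0:ℝ) < τ - t₁)]
      have h2 : t₀ ≤ t₁ + δ₁ / 2 := min_le_left _ _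
      have := hτ.2
      linarith
    have h3 := hδ₁' hτ.1 h1
    rw [Real.dist_eq] at h3
    exact h3.le
  set J : ℝ := ∫ τ in t₀..s, g τ with hJdef
  set K : ℝ := |c| * (t₀ - t₁)⁻¹ + |J| with hKdef
  clear_value K
  have hK0 : 0 ≤ K := by
    rw [hKdef]
    exact add_nonneg (mul_nonneg (abs_nonneg _) ht₀inv.le) (abs_nonneg _)
  refine ⟨min (t₀ - t₁) (ε / 4 / (K + 1)), lt_min (by linarith) (div_pos hε4 (by linarith)), ?_⟩
  intro t ht hdist
  have ht1 : t₁ < t := ht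
  rw [Real.dist_eq, abs_of_pos (by linarith : (0:ℝ) < t - t₁)] at hdist
  have htt₀ : t < t₀ := by
    have := lt_of_lt_of_le hdist (min_le_left _ _)
    linarith
  have htne : t - t₁ ≠ 0 := by intro h; rw [sub_eq_zero] at h; exact ht1.ne' h
  have htK : (t - t₁) * (K + 1) < ε / 4 := by
    have h1 : t - t₁ < ε / 4 / (K + 1) := lt_of_lt_of_le hdist (min_le_right _ _)
    calc (t - t₁) * (K + 1) < ε / 4 / (K + 1) * (K + 1) := by
          apply mul_lt_mul_of_pos_right h1; linarith
      _ = ε / 4 := by field_simp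
  have hsplit : (∫ τ in t..s, g τ) = (∫ τ in t..t₀, g τ) + J :=
    (integral_add_adjacent_intervals (hInt t t₀ ht1 ht₀1) (hInt t₀ s ht₀1 (by linarith))).symm
  have hcong : (∫ τ in t..t₀, g τ)
      = ∫ τ in t..t₀, ((τ - t₁) ^ 2)⁻¹ * ((τ - t₁) ^ 2 * g τ - c) + c * ((τ - t₁) ^ 2)⁻¹ := by
    apply integral_congr
    intro τ hτ
    have hτ1 : t₁ < τ := lt_of_lt_of_le (lt_min ht1 ht₀1) hτ.1
    have hne : (τ - t₁) ^ 2 ≠ 0 := pow_ne_zero 2 (sub_ne_zero.2 hτ1.ne')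
    field_simp
    rw [sub_add_cancel, mul_div_cancel_right₀ _ hne]
  have hφcont : ContinuousOn (fun τ : ℝ => ((τ - t₁) ^ 2)⁻¹) (uIcc t t₀) := by
    apply ContinuousOn.inv₀
    · fun_prop
    · intro x hx
      have hx1 : t₁ < x := lt_of_lt_of_le (lt_min ht1 ht₀1) hx.1
      exact pow_ne_zero 2 (sub_ne_zero.2 hx1.ne')
  have hhcont : ContinuousOn (fun τ : ℝ => ((τ - t₁) ^ 2)⁻¹ * ((τ - t₁) ^ 2 * g τ - c))
      (uIcc t t₀) := by
    apply hφcont.mul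
    apply ContinuousOn.sub _ continuousOn_const
    exact ContinuousOn.mul (by fun_prop) (hgon t t₀ ht1 ht₀1)
  have hint1 : IntervalIntegrable (fun τ : ℝ => ((τ - t₁) ^ 2)⁻¹ * ((τ - t₁) ^ 2 * g τ - c))
      MeasureTheory.volume t t₀ := hhcont.intervalIntegrable
  have hint2 : IntervalIntegrable (fun τ : ℝ => c * ((τ - t₁) ^ 2)⁻¹)
      MeasureTheory.volume t t₀ := (continuousOn_const.mul hφcont).intervalIntegrable
  have hintc : IntervalIntegrable (fun τ : ℝ => ε / 4 * ((τ - t₁) ^ 2)⁻¹)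
      MeasureTheory.volume t t₀ := (continuousOn_const.mul hφcont).intervalIntegrable
  have hadd : (∫ τ in t..t₀, g τ)
      = (∫ τ in t..t₀, ((τ - t₁) ^ 2)⁻¹ * ((τ - t₁) ^ 2 * g τ - c))
        + ∫ τ in t..t₀, c * ((τ - t₁) ^ 2)⁻¹ := by
    rw [hcong, integral_add hint1 hint2]
  have hφval : (∫ τ in t..t₀, ((τ - t₁) ^ 2)⁻¹) = (t - t₁)⁻¹ - (t₀ - t₁)⁻¹ :=
    integral_phi ht1 ht₀1
  have hcφ : (∫ τ in t..t₀, c * ((τ - t₁) ^ 2)⁻¹) = c * ((t - t₁)⁻¹ - (t₀ - t₁)⁻¹) := by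
    rw [intervalIntegral.integral_const_mul, hφval]
  have h3 : (t₀ - t₁)⁻¹ ≤ (t - t₁)⁻¹ := by
    apply inv_anti₀ (by linarith) (by linarith)
  have herr : |∫ τ in t..t₀, ((τ - t₁) ^ 2)⁻¹ * ((τ - t₁) ^ 2 * g τ - c)|
      ≤ ε / 4 * ((t - t₁)⁻¹ - (t₀ - t₁)⁻¹) := by
    have h1 : ∀ᵐ τ ∂(MeasureTheory.volume.restrict (uIoc t t₀)),
        ‖((τ - t₁) ^ 2)⁻¹ * ((τ - t₁) ^ 2 * g τ - c)‖ ≤ ε / 4 * ((τ - t₁) ^ 2)⁻¹ := by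
      apply MeasureTheory.ae_restrict_of_forall_mem measurableSet_uIoc
      intro τ hτ
      rw [uIoc_of_le htt₀.le] at hτ
      have hτ1 : t₁ < τ := lt_trans ht1 hτ.1
      have hτb := hbound τ ⟨hτ1, hτ.2⟩
      have hφpos : (0:ℝ) < ((τ - t₁) ^ 2)⁻¹ := by
        apply inv_pos.2; apply pow_pos; linarith
      rw [Real.norm_eq_abs, abs_mul, abs_of_pos hφpos, mul_comm]
      exact mul_le_mul_of_nonneg_right hτb hφpos.le
    have h2 := intervalIntegral.norm_integral_le_abs_of_norm_le h1 hintc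
    rw [Real.norm_eq_abs] at h2
    refine h2.trans ?_
    rw [intervalIntegral.integral_const_mul, hφval,
      abs_of_nonneg (mul_nonneg (by linarith) (by linarith : (0:ℝ) ≤ (t - t₁)⁻¹ - (t₀ - t₁)⁻¹))]
  rw [Real.dist_eq, hsplit, hadd, hcφ]
  set I : ℝ := ∫ τ in t..t₀, ((τ - t₁) ^ 2)⁻¹ * ((τ - t₁) ^ 2 * g τ - c) with hIdef
  have h4 : (t - t₁) * (t - t₁)⁻¹ = 1 := mul_inv_cancel₀ htne
  have hexp : (t - t₁) * (I + c * ((t - t₁)⁻¹ - (t₀ - t₁)⁻¹) + J) - c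
      = (t - t₁) * I - c * ((t - t₁) * (t₀ - t₁)⁻¹) + (t - t₁) * J := by
    calc (t - t₁) * (I + c * ((t - t₁)⁻¹ - (t₀ - t₁)⁻¹) + J) - c
        = (t - t₁) * I - c * ((t - t₁) * (t₀ - t₁)⁻¹) + (t - t₁) * J
          + c * ((t - t₁) * (t - t₁)⁻¹) - c := by ring
      _ = _ := by rw [h4]; ring
  rw [hexp]
  have e1 : |(t - t₁) * I| = (t - t₁) * |I| := by
    rw [abs_mul, abs_of_pos (by linarith : (0:ℝ) < t - t₁)]
  have e2 : |(t - t₁) * J| = (t - t₁) * |J| := by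
    rw [abs_mul, abs_of_pos (by linarith : (0:ℝ) < t - t₁)]
  have e3 : |c * ((t - t₁) * (t₀ - t₁)⁻¹)| = (t - t₁) * (|c| * (t₀ - t₁)⁻¹) := by
    rw [abs_mul, abs_mul, abs_of_pos (by linarith : (0:ℝ) < t - t₁), abs_of_pos ht₀inv]
    ring
  have habs : |(t - t₁) * I - c * ((t - t₁) * (t₀ - t₁)⁻¹) + (t - t₁) * J|
      ≤ (t - t₁) * |I| + (t - t₁) * (|c| * (t₀ - t₁)⁻¹) + (t - t₁) * |J| := by
    calc |(t - t₁) * I - c * ((t - t₁) * (t₀ - t₁)⁻¹) + (t - t₁) * J|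
        ≤ |(t - t₁) * I - c * ((t - t₁) * (t₀ - t₁)⁻¹)| + |(t - t₁) * J| := abs_add_le _ _
      _ ≤ |(t - t₁) * I| + |c * ((t - t₁) * (t₀ - t₁)⁻¹)| + |(t - t₁) * J| := by
          have := abs_sub ((t - t₁) * I) (c * ((t - t₁) * (t₀ - t₁)⁻¹))
          linarith
      _ = (t - t₁) * |I| + (t - t₁) * (|c| * (t₀ - t₁)⁻¹) + (t - t₁) * |J| := by
          rw [e1, e2, e3]
  have hI : (t - t₁) * |I| ≤ ε / 4 := by
    have h1 : (t - t₁) * |I| ≤ (t - t₁) * (ε / 4 * ((t - t₁)⁻¹ - (t₀ - t₁)⁻¹)) :=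
      mul_le_mul_of_nonneg_left herr (by linarith)
    refine h1.trans ?_
    have h5 : (0:ℝ) ≤ (t - t₁) * (t₀ - t₁)⁻¹ :=
      mul_nonneg (by linarith) ht₀inv.le
    nlinarith [hε4.le]
  have hKterm : (t - t₁) * (|c| * (t₀ - t₁)⁻¹) + (t - t₁) * |J| = (t - t₁) * K := by
    rw [hKdef]; ring
  have hfin : (t - t₁) * K ≤ (t - t₁) * (K + 1) :=
    mul_le_mul_of_nonneg_left (by linarith) (by linarith)
  calc |(t - t₁) * I - c * ((t - t₁) * (t₀ - t₁)⁻¹) + (t - t₁) * J|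
      ≤ (t - t₁) * |I| + (t - t₁) * (|c| * (t₀ - t₁)⁻¹) + (t - t₁) * |J| := habs
    _ = (t - t₁) * |I| + (t - t₁) * K := by rw [← hKterm]; ring
    _ < ε := by nlinarith [hfin, htK, hI, hε]

end

end Stmt10Aux
set_option maxHeartbeats 3200000 in
/-- Lemma 3.7 ([BEE, Lemma 12.12]): if A solves A'' + RA = 0 with A(t₁) = 0,
A'(t₁) = I and A(t) is invertible for t > t₁, then for s > t₁ the field
D_s(t) = A(t)·∫ₜˢ (AᵀA)⁻¹ solves the Jacobi equation, vanishes at s, tends to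
the identity as t → t₁⁺, and is invertible on (t₁, s). -/
theorem stmt_10 (k : ℕ) (t₁ : ℝ)
    (R A A' A'' : ℝ → Matrix (Fin k) (Fin k) ℝ)
    (hRcont : ∀ i j, ContinuousOn (fun t => R t i j) (Ici t₁))
    (hRsym : ∀ t ∈ Ici t₁, (R t)ᵀ = R t)
    (hA : ∀ t ∈ Ici t₁, ∀ i j, HasDerivAt (fun s => A s i j) (A' t i j) t)
    (hA' : ∀ t ∈ Ici t₁, ∀ i j, HasDerivAt (fun s => A' s i j) (A'' t i j) t)
    (hode : ∀ t ∈ Ici t₁, A'' t + R t * A t = 0)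
    (hinit0 : A t₁ = 0) (hinit1 : A' t₁ = 1)
    (hnoconj : ∀ t, t₁ < t → IsUnit (A t).det)
    (s : ℝ) (hs : t₁ < s)
    (D : ℝ → Matrix (Fin k) (Fin k) ℝ)
    (hD : ∀ t : ℝ, D t = A t * Matrix.of fun i j => ∫ τ in t..s, ((A τ)ᵀ * A τ)⁻¹ i j) :
    D s = 0 ∧
    (∀ t ∈ Ioo t₁ s, IsUnit (D t).det) ∧
    (∀ i j, Filter.Tendsto (fun t => D t i j) (nhdsWithin t₁ (Ioi t₁))
      (nhds ((1 : Matrix (Fin k) (Fin k) ℝ) i j))) ∧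
    ∃ D' : ℝ → Matrix (Fin k) (Fin k) ℝ,
      (∀ t ∈ Ioo t₁ s, ∀ i j, HasDerivAt (fun u => D u i j) (D' t i j) t) ∧
      (∀ t ∈ Ioo t₁ s, ∀ i j, HasDerivAt (fun u => D' u i j) ((-(R t * D t)) i j) t) := by
  classical
  set G : ℝ → Matrix (Fin k) (Fin k) ℝ := fun τ => ((A τ)ᵀ * A τ)⁻¹ with hGdef
  set M : ℝ → Matrix (Fin k) (Fin k) ℝ :=
    fun t => Matrix.of fun i j => ∫ τ in t..s, G τ i j with hMdef
  have hMapply : ∀ t i j, M t i j = ∫ τ in t..s, G τ i j := fun t i j => rfl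
  have hDM : ∀ t, D t = A t * M t := hD
  have hAdet : ∀ τ, t₁ < τ → (A τ).det ≠ 0 := fun τ h => (hnoconj τ h).ne_zero
  have hAAdet : ∀ τ, t₁ < τ → ((A τ)ᵀ * A τ).det ≠ 0 := by
    intro τ h
    rw [Matrix.det_mul, Matrix.det_transpose]
    exact mul_ne_zero (hAdet τ h) (hAdet τ h)
  have hAAunit : ∀ τ, t₁ < τ → IsUnit ((A τ)ᵀ * A τ).det :=
    fun τ h => isUnit_iff_ne_zero.2 (hAAdet τ h)
  have hAcont : ∀ τ ∈ Ici t₁, ∀ i j, ContinuousAt (fun u => A u i j) τ :=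
    fun τ hτ i j => (hA τ hτ i j).continuousAt
  have hAAapply : ∀ u i j, ((A u)ᵀ * A u) i j = ∑ l, A u l i * A u l j := by
    intro u i j
    simp [Matrix.mul_apply, Matrix.transpose_apply]
  have hAAcont : ∀ τ ∈ Ici t₁, ∀ i j,
      ContinuousAt (fun u => ((A u)ᵀ * A u) i j) τ := by
    intro τ hτ i j
    have h2 : (fun u => ((A u)ᵀ * A u) i j) = fun u => ∑ l, A u l i * A u l j :=
      funext fun u => hAAapply u i j
    rw [h2]
    exact tendsto_finset_sum _ fun l _ => (hAcont τ hτ l i).mul (hAcont τ hτ l j)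
  have hGcont : ∀ τ ∈ Ioi t₁, ∀ i j, ContinuousAt (fun u => G u i j) τ := by
    intro τ hτ i j
    exact Stmt10Aux.tendsto_inv_entries
      (fun a b => hAAcont τ (mem_Ici.2 (le_of_lt (mem_Ioi.1 hτ))) a b) (hAAdet τ hτ) i j
  have hGintOn : ∀ a b : ℝ, t₁ < a → t₁ < b → ∀ i j,
      IntervalIntegrable (fun τ => G τ i j) MeasureTheory.volume a b := by
    intro a b ha hb i j
    apply ContinuousOn.intervalIntegrable
    intro x hx
    exact (hGcont x (lt_of_lt_of_le (lt_min ha hb) hx.1) i j).continuousWithinAt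
  have hMderiv : ∀ t, t₁ < t → ∀ i j,
      HasDerivAt (fun u => M u i j) (-(G t i j)) t := by
    intro t ht i j
    have hmeas : StronglyMeasurableAtFilter (fun τ => G τ i j) (nhds t)
        MeasureTheory.volume :=
      ContinuousAt.stronglyMeasurableAtFilter isOpen_Ioi
        (fun x hx => hGcont x hx i j) t ht
    exact intervalIntegral.integral_hasDerivAt_left (hGintOn t s ht hs i j)
      hmeas (hGcont t ht i j)
  -- (1) D s = 0
  have hDs : D s = 0 := by
    rw [hDM s]
    have hM0 : M s = 0 := by
      ext i j
      simp [hMapply, intervalIntegral.integral_same]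
    rw [hM0, mul_zero]
  have hGsymm : ∀ τ, (G τ)ᵀ = G τ := by
    intro τ
    show (((A τ)ᵀ * A τ)⁻¹)ᵀ = ((A τ)ᵀ * A τ)⁻¹
    rw [Matrix.transpose_nonsing_inv, Matrix.transpose_mul, Matrix.transpose_transpose]
  have hGQQ : ∀ τ, G τ = (A τ)⁻¹ * ((A τ)⁻¹)ᵀ := by
    intro τ
    rw [hGdef]
    show ((A τ)ᵀ * A τ)⁻¹ = _
    rw [Matrix.mul_inv_rev, ← Matrix.transpose_nonsing_inv]
  have hA''eq : ∀ t ∈ Ici t₁, A'' t = -(R t * A t) :=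
    fun t ht => eq_neg_of_add_eq_zero_left (hode t ht)
  have hsymm'' : ∀ t ∈ Ici t₁, (A t)ᵀ * A'' t = (A'' t)ᵀ * A t := by
    intro t ht
    rw [hA''eq t ht, Matrix.transpose_neg, Matrix.transpose_mul, hRsym t ht]
    rw [Matrix.mul_neg, Matrix.neg_mul, Matrix.mul_assoc]
  -- Wronskian symmetry
  have hW : ∀ t ∈ Ici t₁, (A t)ᵀ * A' t = (A' t)ᵀ * A t := by
    intro t ht
    have key : ∀ i j, ((A t)ᵀ * A' t) i j = ((A' t)ᵀ * A t) i j := by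
      intro i j
      set f : ℝ → ℝ :=
        fun v => (∑ l, A v l i * A' v l j) - ∑ l, A' v l i * A v l j with hfdef
      have hf : ∀ u ∈ Ici t₁, HasDerivAt f 0 u := by
        intro u hu
        have h1 : HasDerivAt (fun v => ∑ l, A v l i * A' v l j)
            (∑ l, (A' u l i * A' u l j + A u l i * A'' u l j)) u :=
          HasDerivAt.fun_sum fun l _ => (hA u hu l i).mul (hA' u hu l j)
        have h2 : HasDerivAt (fun v => ∑ l, A' v l i * A v l j)
            (∑ l, (A'' u l i * A u l j + A' u l i * A' u l j)) u :=
          HasDerivAt.fun_sum fun l _ => (hA' u hu l i).mul (hA u hu l j)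
        have h3 := h1.sub h2
        have hval : (∑ l, (A' u l i * A' u l j + A u l i * A'' u l j))
            - ∑ l, (A'' u l i * A u l j + A' u l i * A' u l j) = 0 := by
          have e1 : ((A u)ᵀ * A'' u) i j = ∑ l, A u l i * A'' u l j := by
            simp [Matrix.mul_apply, Matrix.transpose_apply]
          have e2 : ((A'' u)ᵀ * A u) i j = ∑ l, A'' u l i * A u l j := by
            simp [Matrix.mul_apply, Matrix.transpose_apply]
          have e3 : ((A u)ᵀ * A'' u) i j = ((A'' u)ᵀ * A u) i j := by
            rw [hsymm'' u hu]
          rw [e1, e2] at e3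
          rw [Finset.sum_add_distrib, Finset.sum_add_distrib]
          linarith [e3]
        rw [hval] at h3
        exact h3
      have hft₁ : f t₁ = 0 := by
        simp [hfdef, hinit0]
      rcases eq_or_lt_of_le (mem_Ici.1 ht) with h | h
      · rw [← h]
        simp [Matrix.mul_apply, Matrix.transpose_apply, hinit0, hinit1]
      · have hconst : f t = f t₁ := by
          have hdiff : DifferentiableOn ℝ f (Icc t₁ t) := fun x hx =>
            ((hf x hx.1).differentiableAt).differentiableWithinAt
          have hderiv : ∀ x ∈ Ico t₁ t, derivWithin f (Icc t₁ t) x = 0 := by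
            intro x hx
            exact ((hf x hx.1).hasDerivWithinAt).derivWithin
              ((uniqueDiffOn_Icc h) x (Ico_subset_Icc_self hx))
          exact constant_of_derivWithin_zero hdiff hderiv t (right_mem_Icc.2 h.le)
        have hzero : f t = 0 := hconst.trans hft₁
        have e1 : ((A t)ᵀ * A' t) i j = ∑ l, A t l i * A' t l j := by
          simp [Matrix.mul_apply, Matrix.transpose_apply]
        have e2 : ((A' t)ᵀ * A t) i j = ∑ l, A' t l i * A t l j := by
          simp [Matrix.mul_apply, Matrix.transpose_apply]
        rw [e1, e2]
        exact sub_eq_zero.1 hzero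
    ext i j
    exact key i j
  -- A * G = (Aᵀ)⁻¹
  have hAG : ∀ t, t₁ < t → A t * G t = ((A t)ᵀ)⁻¹ := by
    intro t ht
    rw [hGdef]
    show A t * ((A t)ᵀ * A t)⁻¹ = ((A t)ᵀ)⁻¹
    rw [Matrix.mul_inv_rev, ← Matrix.mul_assoc, Matrix.mul_nonsing_inv _ (hnoconj t ht),
      Matrix.one_mul]
  -- derivative of D entries
  have hDderiv : ∀ t, t₁ < t → ∀ i j,
      HasDerivAt (fun u => D u i j) ((A' t * M t - A t * G t) i j) t := by
    intro t ht i j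
    have h0 : (fun u => D u i j) = fun u => ∑ l, A u i l * M u l j := by
      funext u
      rw [hDM u, Matrix.mul_apply]
    rw [h0]
    have h1 : HasDerivAt (fun u => ∑ l, A u i l * M u l j)
        (∑ l, (A' t i l * M t l j + A t i l * -(G t l j))) t :=
      HasDerivAt.fun_sum fun l _ => (hA t ht.le i l).mul (hMderiv t ht l j)
    convert h1 using 1
    rw [Matrix.sub_apply, Matrix.mul_apply, Matrix.mul_apply, ← Finset.sum_sub_distrib]
    exact Finset.sum_congr rfl fun l _ => by ring
  -- differentiability of the inverse entries
  have hQdiff : ∀ t, t₁ < t → ∀ i j,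
      DifferentiableAt ℝ (fun u => (A u)⁻¹ i j) t := by
    intro t ht i j
    exact Stmt10Aux.inv_differentiableAt
      (fun a b => (hA t ht.le a b).differentiableAt) (hAdet t ht) i j
  set q' : ℝ → Matrix (Fin k) (Fin k) ℝ :=
    fun t => Matrix.of fun i j => deriv (fun u => (A u)⁻¹ i j) t with hq'def
  have hq'deriv : ∀ t, t₁ < t → ∀ i j,
      HasDerivAt (fun u => (A u)⁻¹ i j) (q' t i j) t :=
    fun t ht i j => (hQdiff t ht i j).hasDerivAt
  have hq'eq : ∀ t, t₁ < t → A' t * (A t)⁻¹ + A t * q' t = 0 := by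
    intro t ht
    ext i j
    have h1 : HasDerivAt (fun u => ∑ l, A u i l * (A u)⁻¹ l j)
        (∑ l, (A' t i l * (A t)⁻¹ l j + A t i l * q' t l j)) t :=
      HasDerivAt.fun_sum fun l _ => (hA t ht.le i l).mul (hq'deriv t ht l j)
    have heq : (fun u => ∑ l, A u i l * (A u)⁻¹ l j)
        =ᶠ[nhds t] fun _ => (1 : Matrix (Fin k) (Fin k) ℝ) i j := by
      filter_upwards [isOpen_Ioi.mem_nhds ht] with u hu
      rw [← Matrix.mul_apply, Matrix.mul_nonsing_inv _ (hnoconj u hu)]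
    have h2 : HasDerivAt (fun u => ∑ l, A u i l * (A u)⁻¹ l j) 0 t :=
      (hasDerivAt_const t _).congr_of_eventuallyEq heq
    have h3 := h1.unique h2
    rw [Matrix.add_apply, Matrix.mul_apply, Matrix.mul_apply, ← Finset.sum_add_distrib,
      Matrix.zero_apply, ← h3]
  have hq'val : ∀ t, t₁ < t → q' t = -((A t)⁻¹ * A' t * (A t)⁻¹) := by
    intro t ht
    have h1 : A t * q' t = -(A' t * (A t)⁻¹) :=
      eq_neg_of_add_eq_zero_right (hq'eq t ht)
    calc q' t = ((A t)⁻¹ * A t) * q' t := by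
          rw [Matrix.nonsing_inv_mul _ (hnoconj t ht), Matrix.one_mul]
      _ = (A t)⁻¹ * (A t * q' t) := by rw [Matrix.mul_assoc]
      _ = (A t)⁻¹ * -(A' t * (A t)⁻¹) := by rw [h1]
      _ = -((A t)⁻¹ * A' t * (A t)⁻¹) := by
          rw [Matrix.mul_neg, Matrix.mul_assoc]
  have hsymQ : ∀ t, t₁ < t → ((A t)⁻¹)ᵀ * (A' t)ᵀ = A' t * (A t)⁻¹ := by
    intro t ht
    calc ((A t)⁻¹)ᵀ * (A' t)ᵀ
        = ((A t)⁻¹)ᵀ * (A' t)ᵀ * (A t * (A t)⁻¹) := by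
          rw [Matrix.mul_nonsing_inv _ (hnoconj t ht), Matrix.mul_one]
      _ = ((A t)⁻¹)ᵀ * (((A' t)ᵀ * A t) * (A t)⁻¹) := by
          rw [Matrix.mul_assoc, Matrix.mul_assoc]
      _ = ((A t)⁻¹)ᵀ * (((A t)ᵀ * A' t) * (A t)⁻¹) := by rw [← hW t ht.le]
      _ = (((A t)⁻¹)ᵀ * (A t)ᵀ) * (A' t * (A t)⁻¹) := by
          rw [Matrix.mul_assoc, Matrix.mul_assoc]
      _ = A' t * (A t)⁻¹ := by
          rw [← Matrix.transpose_mul, Matrix.mul_nonsing_inv _ (hnoconj t ht),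
            Matrix.transpose_one, Matrix.one_mul]
  -- (2) invertibility
  have hunit : ∀ t ∈ Ioo t₁ s, IsUnit (D t).det := by
    intro t ht
    have hMpos : (M t).PosDef := by
      rw [Matrix.posDef_iff_dotProduct_mulVec]
      constructor
      · show (M t)ᴴ = M t
        ext i j
        rw [Matrix.conjTranspose_apply, star_trivial, hMapply, hMapply]
        apply intervalIntegral.integral_congr
        intro τ _
        show G τ j i = G τ i j
        conv_lhs => rw [← hGsymm τ]
        rw [Matrix.transpose_apply]
      · intro x hx
        have hstar : star x = x := funext fun i => star_trivial _
        rw [hstar]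
        have hFsingle : ∀ (i j : Fin k),
            IntervalIntegrable (fun τ => x i * G τ i j * x j) MeasureTheory.volume t s :=
          fun i j => ((hGintOn t s ht.1 hs i j).const_mul (x i)).mul_const (x j)
        have hFinner : ∀ i : Fin k,
            IntervalIntegrable (fun τ => ∑ j, x i * G τ i j * x j)
              MeasureTheory.volume t s := by
          intro i
          apply ContinuousOn.intervalIntegrable
          intro y hy
          have hy1 : t₁ < y := lt_of_lt_of_le (lt_min ht.1 (lt_trans ht.1 ht.2)) hy.1
          have hca : ContinuousAt (fun τ => ∑ j, x i * G τ i j * x j) y :=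
            tendsto_finset_sum _ fun j _ =>
              (continuousAt_const.mul (hGcont y hy1 i j)).mul continuousAt_const
          exact hca.continuousWithinAt
        have hFint : IntervalIntegrable (fun τ => ∑ i, ∑ j, x i * G τ i j * x j)
            MeasureTheory.volume t s := by
          apply ContinuousOn.intervalIntegrable
          intro y hy
          have hy1 : t₁ < y := lt_of_lt_of_le (lt_min ht.1 (lt_trans ht.1 ht.2)) hy.1
          have hca : ContinuousAt (fun τ => ∑ i, ∑ j, x i * G τ i j * x j) y :=
            tendsto_finset_sum _ fun i _ => tendsto_finset_sum _ fun j _ =>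
              (continuousAt_const.mul (hGcont y hy1 i j)).mul continuousAt_const
          exact hca.continuousWithinAt
        have hswap : dotProduct x (M t *ᵥ x)
            = ∫ τ in t..s, ∑ i, ∑ j, x i * G τ i j * x j := by
          calc dotProduct x (M t *ᵥ x)
              = ∑ i, ∑ j, x i * (M t i j * x j) := by
                apply Finset.sum_congr rfl
                intro i _
                rw [Matrix.mulVec, dotProduct, Finset.mul_sum]
            _ = ∑ i, ∑ j, ∫ τ in t..s, x i * G τ i j * x j := by
                apply Finset.sum_congr rfl
                intro i _
                apply Finset.sum_congr rfl
                intro j _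
                rw [hMapply]
                rw [show x i * ((∫ τ in t..s, G τ i j) * x j)
                    = (x i * ∫ τ in t..s, G τ i j) * x j from by ring,
                  ← intervalIntegral.integral_const_mul,
                  ← intervalIntegral.integral_mul_const]
            _ = ∑ i, ∫ τ in t..s, ∑ j, x i * G τ i j * x j := by
                apply Finset.sum_congr rfl
                intro i _
                rw [intervalIntegral.integral_finset_sum fun j _ => hFsingle i j]
            _ = ∫ τ in t..s, ∑ i, ∑ j, x i * G τ i j * x j := by
                rw [intervalIntegral.integral_finset_sum fun i _ => hFinner i]
        rw [hswap]
        apply intervalIntegral.intervalIntegral_pos_of_pos_on hFint _ ht.2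
        intro τ hτ
        have hτ1 : t₁ < τ := lt_trans ht.1 hτ.1
        set y : Fin k → ℝ := ((A τ)⁻¹)ᵀ *ᵥ x with hydef
        have hxy : (A τ)ᵀ *ᵥ y = x := by
          rw [hydef, Matrix.mulVec_mulVec, ← Matrix.transpose_mul,
            Matrix.nonsing_inv_mul _ (hnoconj τ hτ1), Matrix.transpose_one,
            Matrix.one_mulVec]
        have hy0 : y ≠ 0 := by
          intro h0
          apply hx
          rw [← hxy, h0, Matrix.mulVec_zero]
        have hFy : (∑ i, ∑ j, x i * G τ i j * x j) = dotProduct y y := by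
          have e0 : (∑ i, ∑ j, x i * G τ i j * x j) = dotProduct x (G τ *ᵥ x) := by
            apply Finset.sum_congr rfl
            intro i _
            rw [Matrix.mulVec, dotProduct, Finset.mul_sum]
            apply Finset.sum_congr rfl
            intro j _
            ring
          rw [e0, hGQQ τ, ← Matrix.mulVec_mulVec, Matrix.dotProduct_mulVec,
            ← Matrix.mulVec_transpose]
        rw [hFy]
        obtain ⟨i0, hi0⟩ := Function.ne_iff.1 hy0
        show (0:ℝ) < ∑ i, y i * y i
        apply Finset.sum_pos' (fun i _ => mul_self_nonneg (y i))
        exact ⟨i0, Finset.mem_univ i0, mul_self_pos.2 hi0⟩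
    rw [hDM t, Matrix.det_mul]
    exact (hnoconj t ht.1).mul (isUnit_iff_ne_zero.2 hMpos.det_pos.ne')
  -- (3) the limit
  have hslope : ∀ a b, Filter.Tendsto (fun τ => (τ - t₁)⁻¹ * A τ a b)
      (nhdsWithin t₁ (Ioi t₁)) (nhds ((1 : Matrix (Fin k) (Fin k) ℝ) a b)) := by
    intro a b
    have h0 := hA t₁ self_mem_Ici a b
    rw [hasDerivAt_iff_tendsto_slope] at h0
    have h1 : Filter.Tendsto (slope (fun u => A u a b) t₁) (nhdsWithin t₁ (Ioi t₁))
        (nhds (A' t₁ a b)) :=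
      h0.mono_left (nhdsWithin_mono t₁ fun x hx => ne_of_gt hx)
    rw [hinit1] at h1
    apply Filter.Tendsto.congr' _ h1
    filter_upwards [self_mem_nhdsWithin] with τ hτ
    rw [slope_def_field]
    have : A t₁ a b = 0 := by rw [hinit0]; rfl
    rw [this, sub_zero, div_eq_inv_mul]
  have hMlim : ∀ l j, Filter.Tendsto (fun t => (t - t₁) * M t l j)
      (nhdsWithin t₁ (Ioi t₁)) (nhds ((1 : Matrix (Fin k) (Fin k) ℝ) l j)) := by
    intro l j
    have hg : ∀ τ ∈ Ioi t₁, ContinuousAt (fun τ => G τ l j) τ :=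
      fun τ hτ => hGcont τ hτ l j
    have hlim2 : Filter.Tendsto (fun τ => (τ - t₁) ^ 2 * G τ l j)
        (nhdsWithin t₁ (Ioi t₁)) (nhds ((1 : Matrix (Fin k) (Fin k) ℝ) l j)) := by
      set F : ℝ → Matrix (Fin k) (Fin k) ℝ :=
        fun τ => ((τ - t₁)⁻¹ • A τ)ᵀ * ((τ - t₁)⁻¹ • A τ) with hFdef2
      have hFent : ∀ a b, Filter.Tendsto (fun τ => F τ a b) (nhdsWithin t₁ (Ioi t₁))
          (nhds ((1 : Matrix (Fin k) (Fin k) ℝ) a b)) := by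
        intro a b
        have hsum : ∀ τ, F τ a b = ∑ m, ((τ - t₁)⁻¹ * A τ m a) * ((τ - t₁)⁻¹ * A τ m b) := by
          intro τ
          rw [hFdef2]
          show (((τ - t₁)⁻¹ • A τ)ᵀ * ((τ - t₁)⁻¹ • A τ)) a b = _
          rw [Matrix.mul_apply]
          apply Finset.sum_congr rfl
          intro m _
          rw [Matrix.transpose_apply, Matrix.smul_apply, Matrix.smul_apply,
            smul_eq_mul, smul_eq_mul]
        have h2 : Filter.Tendsto
            (fun τ => ∑ m, ((τ - t₁)⁻¹ * A τ m a) * ((τ - t₁)⁻¹ * A τ m b))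
            (nhdsWithin t₁ (Ioi t₁))
            (nhds (∑ m, (1 : Matrix (Fin k) (Fin k) ℝ) m a
              * (1 : Matrix (Fin k) (Fin k) ℝ) m b)) :=
          tendsto_finset_sum _ fun m _ => (hslope m a).mul (hslope m b)
        have hval : (∑ m, (1 : Matrix (Fin k) (Fin k) ℝ) m a
            * (1 : Matrix (Fin k) (Fin k) ℝ) m b) = (1 : Matrix (Fin k) (Fin k) ℝ) a b := by
          simp [Matrix.one_apply, eq_comm]
        rw [hval] at h2
        exact Filter.Tendsto.congr (fun τ => (hsum τ).symm) h2
      have hFinv : ∀ τ ∈ Ioi t₁, (F τ)⁻¹ = ((τ - t₁) ^ 2) • G τ := by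
        intro τ hτ
        have hτne : τ - t₁ ≠ 0 := sub_ne_zero.2 (ne_of_gt hτ)
        have hFsmul : F τ = ((τ - t₁) ^ 2)⁻¹ • ((A τ)ᵀ * A τ) := by
          rw [hFdef2]
          show (((τ - t₁)⁻¹ • A τ)ᵀ * ((τ - t₁)⁻¹ • A τ)) = _
          rw [Matrix.transpose_smul, Matrix.smul_mul, Matrix.mul_smul, smul_smul,
            ← mul_inv, ← sq]
        apply Matrix.inv_eq_right_inv
        rw [hFsmul, Matrix.smul_mul, Matrix.mul_smul, smul_smul,
          inv_mul_cancel₀ (pow_ne_zero 2 hτne), one_smul, hGdef]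
        show (A τ)ᵀ * A τ * ((A τ)ᵀ * A τ)⁻¹ = 1
        exact Matrix.mul_nonsing_inv _ (hAAunit τ hτ)
      have h3 : Filter.Tendsto (fun τ => (F τ)⁻¹ l j) (nhdsWithin t₁ (Ioi t₁))
          (nhds ((1 : Matrix (Fin k) (Fin k) ℝ)⁻¹ l j)) :=
        Stmt10Aux.tendsto_inv_entries hFent (by rw [Matrix.det_one]; exact one_ne_zero) l j
      have hinv1 : (1 : Matrix (Fin k) (Fin k) ℝ)⁻¹ = 1 :=
        Matrix.inv_eq_right_inv (by rw [Matrix.one_mul])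
      rw [hinv1] at h3
      apply Filter.Tendsto.congr' _ h3
      filter_upwards [self_mem_nhdsWithin] with τ hτ
      rw [hFinv τ hτ, Matrix.smul_apply, smul_eq_mul]
    exact Stmt10Aux.tendsto_key hs hg hlim2
  have hlimit : ∀ i j, Filter.Tendsto (fun t => D t i j) (nhdsWithin t₁ (Ioi t₁))
      (nhds ((1 : Matrix (Fin k) (Fin k) ℝ) i j)) := by
    intro i j
    have h2 : Filter.Tendsto
        (fun t => ∑ l, ((t - t₁)⁻¹ * A t i l) * ((t - t₁) * M t l j))
        (nhdsWithin t₁ (Ioi t₁))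
        (nhds (∑ l, (1 : Matrix (Fin k) (Fin k) ℝ) i l
          * (1 : Matrix (Fin k) (Fin k) ℝ) l j)) :=
      tendsto_finset_sum _ fun l _ => (hslope i l).mul (hMlim l j)
    have hval : (∑ l, (1 : Matrix (Fin k) (Fin k) ℝ) i l
        * (1 : Matrix (Fin k) (Fin k) ℝ) l j) = (1 : Matrix (Fin k) (Fin k) ℝ) i j := by
      rw [← Matrix.mul_apply, Matrix.one_mul]
    rw [hval] at h2
    apply Filter.Tendsto.congr' _ h2
    filter_upwards [self_mem_nhdsWithin] with t ht
    have htne : t - t₁ ≠ 0 := sub_ne_zero.2 (ne_of_gt ht)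
    rw [hDM t, Matrix.mul_apply]
    apply Finset.sum_congr rfl
    intro l _
    calc ((t - t₁)⁻¹ * A t i l) * ((t - t₁) * M t l j)
        = ((t - t₁)⁻¹ * (t - t₁)) * (A t i l * M t l j) := by ring
      _ = A t i l * M t l j := by rw [inv_mul_cancel₀ htne, one_mul]
  -- (4) the derivatives
  set D' : ℝ → Matrix (Fin k) (Fin k) ℝ := fun t => A' t * M t - ((A t)ᵀ)⁻¹ with hD'def
  have h4a : ∀ t ∈ Ioo t₁ s, ∀ i j, HasDerivAt (fun u => D u i j) (D' t i j) t := by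
    intro t ht i j
    have h1 := hDderiv t ht.1 i j
    have h2 : A' t * M t - A t * G t = D' t := by
      rw [hD'def, hAG t ht.1]
    rw [h2] at h1
    exact h1
  have h4b : ∀ t ∈ Ioo t₁ s, ∀ i j,
      HasDerivAt (fun u => D' u i j) ((-(R t * D t)) i j) t := by
    intro t ht i j
    have e : (fun u => D' u i j) = fun u => (∑ l, A' u i l * M u l j) - (A u)⁻¹ j i := by
      funext u
      rw [hD'def]
      show (A' u * M u - ((A u)ᵀ)⁻¹) i j = _
      rw [Matrix.sub_apply, Matrix.mul_apply]
      congr 1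
      rw [← Matrix.transpose_nonsing_inv, Matrix.transpose_apply]
    rw [e]
    have h1 : HasDerivAt (fun u => ∑ l, A' u i l * M u l j)
        (∑ l, (A'' t i l * M t l j + A' t i l * -(G t l j))) t :=
      HasDerivAt.fun_sum fun l _ => (hA' t ht.1.le i l).mul (hMderiv t ht.1 l j)
    have h2 := hq'deriv t ht.1 j i
    have h3 := h1.fun_sub h2
    refine h3.congr_deriv (Eq.symm ?_)
    -- value identity
    have hQAQ : (q' t)ᵀ = -(A' t * G t) := by
      rw [hq'val t ht.1, Matrix.transpose_neg, Matrix.transpose_mul, Matrix.transpose_mul,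
        ← Matrix.mul_assoc, hsymQ t ht.1, Matrix.mul_assoc, ← hGQQ t]
    have hmat : A'' t * M t - A' t * G t - (q' t)ᵀ = -(R t * D t) := by
      rw [hQAQ, sub_neg_eq_add, sub_add_cancel, hA''eq t ht.1.le, Matrix.neg_mul,
        hDM t, Matrix.mul_assoc]
    have hsum : (∑ l, (A'' t i l * M t l j + A' t i l * -(G t l j)))
        = (A'' t * M t - A' t * G t) i j := by
      rw [Matrix.sub_apply, Matrix.mul_apply, Matrix.mul_apply, ← Finset.sum_sub_distrib]
      exact Finset.sum_congr rfl fun l _ => by ring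
    calc (-(R t * D t)) i j
        = (A'' t * M t - A' t * G t - (q' t)ᵀ) i j := by rw [hmat]
      _ = (A'' t * M t - A' t * G t) i j - (q' t)ᵀ i j := by rw [Matrix.sub_apply]
      _ = (∑ l, (A'' t i l * M t l j + A' t i l * -(G t l j))) - q' t j i := by
          rw [hsum, Matrix.transpose_apply]
  exact ⟨hDs, hunit, hlimit, D', h4a, h4b⟩
end

section
/- Let θ : [t₁, ∞) → ℝ be differentiable, θ ≤ θ(t₁) < 0 non-increasing in the sense θ' ≤ 0, and satisfy θ'(t) ≤ −θ(t)²/(n−1) − 2θ(t) g'(t)/(n−1) with g differentiable and g ≤ k. Then for all t > t₁, 0 < −(n−1)/θ(t) ≤ (t₁ − t) − (n − 1 + 2k − 2g(t₁))/θ(t₁). -/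
open Set

/-- The integrated estimate in the proof of Proposition 3.4: for a nonincreasing
negative solution of the modified Riccati inequality with g ≤ k, one has
0 < −(n−1)/θ(t) ≤ (t₁ − t) − (n − 1 + 2k − 2g(t₁))/θ(t₁) for all t > t₁. -/
theorem stmt_12 (n : ℕ) (hn : 2 ≤ n) (t₁ k : ℝ) (θ θ' g g' : ℝ → ℝ)
    (hθ : ∀ t ∈ Ici t₁, HasDerivAt θ (θ' t) t)
    (hg : ∀ t ∈ Ici t₁, HasDerivAt g (g' t) t)
    (hmono : ∀ t ∈ Ici t₁, θ' t ≤ 0)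
    (hbound : ∀ t ∈ Ici t₁, θ t ≤ θ t₁)
    (hneg : θ t₁ < 0)
    (hineq : ∀ t ∈ Ici t₁,
      θ' t ≤ -θ t ^ 2 / ((n : ℝ) - 1) - 2 * θ t * g' t / ((n : ℝ) - 1))
    (hgk : ∀ t ∈ Ici t₁, g t ≤ k) :
    ∀ t, t₁ < t →
      0 < -((n : ℝ) - 1) / θ t ∧
      -((n : ℝ) - 1) / θ t ≤ (t₁ - t) - ((n : ℝ) - 1 + 2 * k - 2 * g t₁) / θ t₁ := by
  have hm : (1:ℝ) ≤ (n:ℝ) - 1 := by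
    have : (2:ℝ) ≤ (n:ℝ) := by exact_mod_cast hn
    linarith
  set m : ℝ := (n:ℝ) - 1 with hm_def
  have hm0 : (0:ℝ) < m := by linarith
  have hθneg : ∀ t ∈ Ici t₁, θ t < 0 := fun t ht => lt_of_le_of_lt (hbound t ht) hneg
  set Φ : ℝ → ℝ := fun t => t + (2 * g t - m - 2 * k) / θ t with hΦ
  have hΦd : ∀ t ∈ Ici t₁, HasDerivAt Φ
      (1 + ((2 * g' t) * θ t - (2 * g t - m - 2 * k) * θ' t) / θ t ^ 2) t := by
    intro t ht
    have h1 : HasDerivAt (fun t => 2 * g t - m - 2 * k) (2 * g' t) t := by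
      have := (hg t ht).const_mul 2
      simpa using (this.sub_const m).sub_const (2*k)
    exact (hasDerivAt_id t).add (h1.div (hθ t ht) (hθneg t ht).ne)
  have hΦanti : AntitoneOn Φ (Ici t₁) := by
    apply antitoneOn_of_deriv_nonpos (convex_Ici t₁)
    · exact fun t ht => ((hΦd t ht).continuousAt).continuousWithinAt
    · intro t ht
      rw [interior_Ici] at ht
      exact ((hΦd t (Ioi_subset_Ici_self ht)).differentiableAt).differentiableWithinAt
    · intro t ht
      rw [interior_Ici] at ht
      have ht' : t ∈ Ici t₁ := Ioi_subset_Ici_self ht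
      rw [(hΦd t ht').deriv]
      have ha : θ t < 0 := hθneg t ht'
      have ha2 : (0:ℝ) < θ t ^ 2 := by nlinarith
      have hiq := hineq t ht'
      have hiq' : m * θ' t ≤ -θ t ^ 2 - 2 * θ t * g' t := by
        have h := mul_le_mul_of_nonneg_left hiq hm0.le
        calc m * θ' t ≤ m * (-θ t ^ 2 / m - 2 * θ t * g' t / m) := h
          _ = -θ t ^ 2 - 2 * θ t * g' t := by field_simp
      have hprod : (2 * k - 2 * g t) * θ' t ≤ 0 :=
        mul_nonpos_of_nonneg_of_nonpos (by linarith [hgk t ht']) (hmono t ht')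
      have hX : (2 * g' t) * θ t - (2 * g t - m - 2 * k) * θ' t ≤ -1 * θ t ^ 2 := by
        nlinarith [hiq', hprod]
      have := (div_le_iff₀ ha2).2 hX
      linarith
  intro t ht
  have ht' : t ∈ Ici t₁ := le_of_lt ht
  have hat : θ t < 0 := hθneg t ht'
  have key : Φ t ≤ Φ t₁ := hΦanti self_mem_Ici ht' (le_of_lt ht)
  have hA : (0:ℝ) ≤ (2 * g t - 2 * k) / θ t := by
    rw [div_nonneg_iff]; right; exact ⟨by linarith [hgk t ht'], hat.le⟩
  have hB : -m / θ t = (2 * g t - m - 2 * k) / θ t - (2 * g t - 2 * k) / θ t := by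
    rw [div_sub_div_same]; ring_nf
  have hC : (2 * g t₁ - m - 2 * k) / θ t₁ = -((m + 2 * k - 2 * g t₁) / θ t₁) := by
    rw [show 2 * g t₁ - m - 2 * k = -(m + 2 * k - 2 * g t₁) by ring, neg_div]
  constructor
  · have h1 : m / θ t < 0 := div_neg_of_pos_of_neg hm0 hat
    rw [neg_div]; linarith
  · simp only [hΦ] at key
    rw [hC] at key
    linarith
end

section
/- Let θ, σ², ω², r : J → ℝ with θ differentiable satisfying θ' = −r − ω² − σ² − θ²/(n−1) (the Raychaudhuri equation), and let h : J → ℝ be twice differentiable. Define θ_f = θ − h' and r_f^m = r + h'' − (h')²/m for m > 0. Then θ_f' = −r_f^m − ω² − σ² − θ²/(n−1) − (h')²/m, and moreover θ_f' ≤ −r_f^m − ω² − σ² − θ_f²/(n+m−1). -/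
open Set

/-- Proposition 2.9, the (m,f)-Raychaudhuri equation in scalar form:
θ_f = θ − h' satisfies θ_f' = −r_f^m − ω² − σ² − θ²/(n−1) − h'²/m, and
θ_f' ≤ −r_f^m − ω² − σ² − θ_f²/(n+m−1). -/
theorem stmt_14 (J : Set ℝ) (n : ℕ) (hn : 2 ≤ n) (m : ℝ) (hm : 0 < m)
    (θ θ' σ2 ω2 r h h' h'' : ℝ → ℝ)
    (hθ : ∀ t ∈ J, HasDerivAt θ (θ' t) t)
    (hh : ∀ t ∈ J, HasDerivAt h (h' t) t)
    (hh' : ∀ t ∈ J, HasDerivAt h' (h'' t) t)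
    (hray : ∀ t ∈ J, θ' t = -r t - ω2 t - σ2 t - θ t ^ 2 / ((n : ℝ) - 1)) :
    ∀ t ∈ J,
      HasDerivAt (fun s => θ s - h' s)
        (-(r t + h'' t - h' t ^ 2 / m) - ω2 t - σ2 t
          - θ t ^ 2 / ((n : ℝ) - 1) - h' t ^ 2 / m) t ∧
      -(r t + h'' t - h' t ^ 2 / m) - ω2 t - σ2 t
          - θ t ^ 2 / ((n : ℝ) - 1) - h' t ^ 2 / m
        ≤ -(r t + h'' t - h' t ^ 2 / m) - ω2 t - σ2 t
          - (θ t - h' t) ^ 2 / ((n : ℝ) + m - 1) := by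
  intro t ht
  have hn1 : (0:ℝ) < (n:ℝ) - 1 := by
    have : (2:ℝ) ≤ (n:ℝ) := by exact_mod_cast hn
    linarith
  constructor
  · have hd := (hθ t ht).sub (hh' t ht)
    have : θ' t - h'' t =
        -(r t + h'' t - h' t ^ 2 / m) - ω2 t - σ2 t
          - θ t ^ 2 / ((n : ℝ) - 1) - h' t ^ 2 / m := by
      rw [hray t ht]; ring
    rwa [this] at hd
  · have key : (θ t - h' t) ^ 2 / ((n:ℝ) + m - 1)
        ≤ θ t ^ 2 / ((n : ℝ) - 1) + h' t ^ 2 / m := by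
      rw [div_add_div _ _ (ne_of_gt hn1) (ne_of_gt hm),
        div_le_div_iff₀ (by linarith) (by positivity)]
      nlinarith [sq_nonneg (θ t * m + h' t * ((n:ℝ)-1)), sq_nonneg (θ t - h' t), sq_nonneg (θ t), sq_nonneg (h' t)]
    linarith
end
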